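/- arXiv:1107.1028 — 2 statements merged into one kernel-verified Lean document; each statement's English description precedes it below -/
import Mathlib

section
/- There exists a constant C such that the following holds. Let v, w : ℝ² → ℝ² be continuously differentiable vector fields with compact support contained in Ω₊ = {(x,y) : y > 1}, and let ū : Ω₊ → ℝ² be a continuously differentiable vector field with N₂ := (∫_{Ω₊} y²|∇ū(x,y)|² dx dy)^{1/2} < ∞ and N_∞ := sup_{(x,y)∈Ω₊} y²·|∇ū(x,y)| < ∞. Then |∫_{Ω₊} [((v+e₁)·∇)ū]·w dx dy| ≤ C (1 + ‖∇v‖_{L²(Ω₊)}) (∫_{Ω₊} |w(x,y)|²/y² dx dy)^{1/2} (N₂ + N_∞). -/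
open MeasureTheory Set

noncomputable section

/-- Squared Euclidean norm of a vector in `ℝ²`. -/
def nsq (v : ℝ × ℝ) : ℝ := v.1 ^ 2 + v.2 ^ 2

/-- Euclidean dot product on `ℝ²`. -/
def dot2 (a b : ℝ × ℝ) : ℝ := a.1 * b.1 + a.2 * b.2

/-- Squared Frobenius norm of the Jacobian matrix `∇v` of a vector field `v` at `p`. -/
def jacsq (v : ℝ × ℝ → ℝ × ℝ) (p : ℝ × ℝ) : ℝ :=
  nsq (fderiv ℝ v p (1, 0)) + nsq (fderiv ℝ v p (0, 1))

/-- The half-plane `Ω₊ = {(x,y) : y > 1}`. -/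
def OmegaPlus : Set (ℝ × ℝ) := {p | 1 < p.2}

lemma nsq_nonneg (v : ℝ × ℝ) : 0 ≤ nsq v := by unfold nsq; positivity

lemma jacsq_nonneg (v : ℝ × ℝ → ℝ × ℝ) (p : ℝ × ℝ) : 0 ≤ jacsq v p :=
  add_nonneg (nsq_nonneg _) (nsq_nonneg _)

lemma abs_dot2_le (a b : ℝ × ℝ) : |dot2 a b| ≤ Real.sqrt (nsq a) * Real.sqrt (nsq b) := by
  rw [← Real.sqrt_mul (nsq_nonneg a)]
  apply Real.abs_le_sqrt
  simp only [nsq, dot2]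
  nlinarith [sq_nonneg (a.1*b.2 - a.2*b.1)]

-- ‖Df u‖ ≤ sqrt(jacsq) * ‖u‖ pointwise
lemma nsq_fderiv_le (g : ℝ × ℝ → ℝ × ℝ) (p u : ℝ × ℝ) :
    nsq (fderiv ℝ g p u) ≤ jacsq g p * nsq u := by
  have hu : u = u.1 • ((1:ℝ), (0:ℝ)) + u.2 • ((0:ℝ), (1:ℝ)) := by
    simp [Prod.ext_iff]
  set L := fderiv ℝ g p
  have : L u = u.1 • L (1,0) + u.2 • L (0,1) := by
    conv_lhs => rw [hu]
    rw [_root_.map_add, _root_.map_smul, _root_.map_smul]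
  rw [this]
  set A := L (1,0); set B := L (0,1)
  simp only [nsq, jacsq, Prod.fst_add, Prod.snd_add, Prod.smul_fst, Prod.smul_snd, smul_eq_mul]
  nlinarith [sq_nonneg (u.1 * B.1 - u.2 * A.1), sq_nonneg (u.1 * B.2 - u.2 * A.2),
    sq_nonneg (u.1 * A.1 + u.2 * B.1), sq_nonneg (u.1 * A.2 + u.2 * B.2)]

lemma sqrt_nsq_add_e1 (u : ℝ × ℝ) :
    Real.sqrt (nsq (u + (1, 0))) ≤ Real.sqrt (nsq u) + 1 := by
  have h : Real.sqrt (nsq u) ^ 2 = nsq u := Real.sq_sqrt (nsq_nonneg u)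
  have h2 : (0:ℝ) ≤ Real.sqrt (nsq u) := Real.sqrt_nonneg (nsq u)
  have hu1 : u.1 ≤ Real.sqrt (nsq u) := by
    calc u.1 ≤ |u.1| := le_abs_self _
      _ = Real.sqrt (u.1 ^ 2) := (Real.sqrt_sq_eq_abs _).symm
      _ ≤ Real.sqrt (nsq u) := Real.sqrt_le_sqrt (by simp only [nsq]; nlinarith [sq_nonneg u.2])
  have hle : nsq (u + (1,0)) ≤ (Real.sqrt (nsq u) + 1) ^ 2 := by
    simp only [nsq, Prod.fst_add, Prod.snd_add] at h h2 hu1 ⊢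
    nlinarith
  calc Real.sqrt (nsq (u + (1,0))) ≤ Real.sqrt ((Real.sqrt (nsq u) + 1)^2) :=
        Real.sqrt_le_sqrt hle
    _ = Real.sqrt (nsq u) + 1 := Real.sqrt_sq (by linarith)

lemma pointwise_bound (ubar v w : ℝ × ℝ → ℝ × ℝ) (p : ℝ × ℝ) :
    |dot2 (fderiv ℝ ubar p (v p + (1, 0))) (w p)| ≤
      Real.sqrt (jacsq ubar p) * (Real.sqrt (nsq (v p)) + 1) * Real.sqrt (nsq (w p)) := by
  calc |dot2 (fderiv ℝ ubar p (v p + (1, 0))) (w p)|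
      ≤ Real.sqrt (nsq (fderiv ℝ ubar p (v p + (1, 0)))) * Real.sqrt (nsq (w p)) :=
        abs_dot2_le _ _
    _ ≤ (Real.sqrt (jacsq ubar p) * (Real.sqrt (nsq (v p)) + 1)) * Real.sqrt (nsq (w p)) := by
        apply mul_le_mul_of_nonneg_right _ (Real.sqrt_nonneg _)
        calc Real.sqrt (nsq (fderiv ℝ ubar p (v p + (1, 0))))
            ≤ Real.sqrt (jacsq ubar p * nsq (v p + (1,0))) :=
              Real.sqrt_le_sqrt (nsq_fderiv_le _ _ _)
          _ = Real.sqrt (jacsq ubar p) * Real.sqrt (nsq (v p + (1,0))) :=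
              Real.sqrt_mul (jacsq_nonneg _ _) _
          _ ≤ Real.sqrt (jacsq ubar p) * (Real.sqrt (nsq (v p)) + 1) :=
              mul_le_mul_of_nonneg_left (sqrt_nsq_add_e1 _) (Real.sqrt_nonneg _)
    _ = _ := by ring

/-- A measurable function vanishing outside a compact set and bounded there is integrable. -/
lemma integrable_of_compact_bound {E : Type*} [MeasurableSpace E] [TopologicalSpace E]
    [BorelSpace E] [T2Space E] (μ : Measure E) [IsFiniteMeasureOnCompacts μ]
    (f : E → ℝ) (hm : AEStronglyMeasurable f μ) (K : Set E) (hK : IsCompact K)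
    (h0 : ∀ p, p ∉ K → f p = 0) (M : ℝ) (hb : ∀ p ∈ K, |f p| ≤ M) :
    Integrable f μ := by
  have hind : K.indicator f = f := by
    funext p
    by_cases hp : p ∈ K
    · simp [Set.indicator_of_mem hp]
    · simp [Set.indicator_of_notMem hp, h0 p hp]
  have hKm : MeasurableSet K := hK.measurableSet
  have hio : IntegrableOn f K μ := by
    refine ⟨hm.restrict, ?_⟩
    refine HasFiniteIntegral.restrict_of_bounded (C := M) hK.measure_lt_top ?_
    exact (ae_restrict_iff' hKm).mpr (Filter.Eventually.of_forall fun p hp => hb p hp)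
  rw [← hind]
  exact hio.integrable_indicator hKm

lemma rpow_two' (x : ℝ) : x ^ (2:ℝ) = x ^ 2 := by
  rw [show (2:ℝ) = ((2:ℕ):ℝ) by norm_num, Real.rpow_natCast]

/-- Cauchy–Schwarz for integrals of nonnegative functions. -/
lemma integral_CS {α : Type*} [MeasurableSpace α] (μ : Measure α) (f g : α → ℝ)
    (hf0 : 0 ≤ᵐ[μ] f) (hg0 : 0 ≤ᵐ[μ] g)
    (hfm : AEStronglyMeasurable f μ) (hgm : AEStronglyMeasurable g μ)
    (hf2 : Integrable (fun a => f a ^ 2) μ) (hg2 : Integrable (fun a => g a ^ 2) μ) :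
    ∫ a, f a * g a ∂μ ≤ (∫ a, f a ^ 2 ∂μ) ^ ((1:ℝ)/2) * (∫ a, g a ^ 2 ∂μ) ^ ((1:ℝ)/2) := by
  have hpq : Real.HolderConjugate 2 2 := Real.holderConjugate_iff.mpr ⟨by norm_num, by norm_num⟩
  have hf : MemLp f (ENNReal.ofReal 2) μ := by
    rw [show ENNReal.ofReal 2 = 2 by simp [ENNReal.ofReal_ofNat]]
    exact (memLp_two_iff_integrable_sq hfm).mpr hf2
  have hg : MemLp g (ENNReal.ofReal 2) μ := by
    rw [show ENNReal.ofReal 2 = 2 by simp [ENNReal.ofReal_ofNat]]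
    exact (memLp_two_iff_integrable_sq hgm).mpr hg2
  have := integral_mul_le_Lp_mul_Lq_of_nonneg hpq hf0 hg0 hf hg
  simpa [rpow_two'] using this

lemma four_rpow_half : (4:ℝ) ^ ((1:ℝ)/2) = 2 := by
  rw [show (4:ℝ) = 2^(2:ℕ) by norm_num, ← Real.rpow_natCast (2:ℝ) 2, ← Real.rpow_mul (by norm_num)]
  norm_num

lemma hardy1d (f : ℝ → ℝ) (hf : ContDiff ℝ 1 f) (hc : HasCompactSupport f)
    (h0 : ∀ t ≤ (1:ℝ), f t = 0) :
    ∫ t in Set.Ioi (1:ℝ), f t ^ 2 / t ^ 2 ≤ 4 * ∫ t in Set.Ioi (1:ℝ), deriv f t ^ 2 := by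
  have hfc : Continuous f := hf.continuous
  have hf' : Continuous (deriv f) := hf.continuous_deriv le_rfl
  have hdiff : Differentiable ℝ f := hf.differentiable one_ne_zero
  -- integrability of (deriv f)^2
  have hcs2 : HasCompactSupport (fun t => deriv f t ^ 2) :=
    hc.deriv.comp_left (g := fun x : ℝ => x ^ 2) (by simp)
  have hI2g : Integrable (fun t => deriv f t ^ 2) := (hf'.pow 2).integrable_of_hasCompactSupport hcs2
  have hI2 : IntegrableOn (fun t => deriv f t ^ 2) (Set.Ioi (1:ℝ)) := hI2g.integrableOn
  -- integrability of f^2 globally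
  have hIf2 : Integrable (fun t => f t ^ 2) :=
    Continuous.integrable_of_hasCompactSupport (f := fun t => f t ^ 2) (hfc.pow 2) (hc.comp_left (g := fun x : ℝ => x ^ 2) (by simp))
  have hm1 : AEStronglyMeasurable (fun t => f t ^ 2 / t ^ 2) (volume.restrict (Set.Ioi (1:ℝ))) :=
    (((hfc.measurable.pow_const 2).div ((measurable_id.pow_const 2))).aestronglyMeasurable).restrict
  have hI1 : IntegrableOn (fun t => f t ^ 2 / t ^ 2) (Set.Ioi (1:ℝ)) := by
    refine Integrable.mono' hIf2.integrableOn hm1 ?_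
    refine (ae_restrict_iff' measurableSet_Ioi).mpr (Filter.Eventually.of_forall fun t ht => ?_)
    have ht1 : (1:ℝ) < t := ht
    have h : f t ^ 2 / t ^ 2 ≤ f t ^ 2 := div_le_self (sq_nonneg _) (by nlinarith)
    rw [Real.norm_eq_abs, abs_of_nonneg (by positivity)]
    exact h
  -- integrability of 2 f f' / t
  have hIffg : Integrable (fun t => 2 * |f t| * |deriv f t|) := by
    apply Continuous.integrable_of_hasCompactSupport
    · exact (continuous_const.mul hfc.abs).mul hf'.abs
    · apply HasCompactSupport.mul_right
      exact (hc.abs).mul_left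
  have hm3 : AEStronglyMeasurable (fun t => 2 * f t * deriv f t / t)
      (volume.restrict (Set.Ioi (1:ℝ))) :=
    ((((measurable_const.mul hfc.measurable).mul hf'.measurable).div
      measurable_id).aestronglyMeasurable).restrict
  have hI3 : IntegrableOn (fun t => 2 * f t * deriv f t / t) (Set.Ioi (1:ℝ)) := by
    refine Integrable.mono' hIffg.integrableOn hm3 ?_
    refine (ae_restrict_iff' measurableSet_Ioi).mpr (Filter.Eventually.of_forall fun t ht => ?_)
    have ht1 : (1:ℝ) < t := ht
    rw [Real.norm_eq_abs, abs_div, abs_of_pos (by linarith : (0:ℝ) < t)]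
    calc |2 * f t * deriv f t| / t ≤ |2 * f t * deriv f t| :=
          div_le_self (abs_nonneg _) (by linarith)
      _ = 2 * |f t| * |deriv f t| := by rw [abs_mul, abs_mul]; simp [abs_of_nonneg]
  -- FTC
  have hg' : ∀ t ∈ Set.Ici (1:ℝ), HasDerivAt (fun s => f s ^ 2 / s)
      (2 * f t * deriv f t / t - f t ^ 2 / t ^ 2) t := by
    intro t ht
    have ht0 : t ≠ 0 := by have : (1:ℝ) ≤ t := ht; linarith
    have h1 : HasDerivAt (fun s => f s ^ 2) (2 * f t * deriv f t) t := by
      have := ((hdiff t).hasDerivAt).fun_pow 2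
      simpa [mul_comm, mul_assoc] using this
    have h2 : HasDerivAt (fun s : ℝ => s) 1 t := hasDerivAt_id t
    have := h1.fun_div h2 ht0
    refine this.congr_deriv ?_
    field_simp
  have hev : ∀ᶠ t in Filter.atTop, f t = 0 := by
    obtain ⟨R, hR⟩ := (hc.isCompact.bddAbove).imp fun R hR => hR
    filter_upwards [Filter.eventually_gt_atTop R] with t ht
    by_contra hne
    exact absurd (hR (subset_tsupport f hne)) (not_le.mpr ht)
  have hT : Filter.Tendsto (fun t => f t ^ 2 / t) Filter.atTop (nhds 0) := by
    refine Filter.Tendsto.congr' ?_ tendsto_const_nhds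
    filter_upwards [hev] with t ht
    simp [ht]
  have hkey : ∫ t in Set.Ioi (1:ℝ), (2 * f t * deriv f t / t - f t ^ 2 / t ^ 2) =
      0 - (fun s => f s ^ 2 / s) 1 :=
    integral_Ioi_of_hasDerivAt_of_tendsto' (f := fun s => f s ^ 2 / s) hg' (hI3.sub hI1) hT
  simp only [h0 1 le_rfl] at hkey
  have hsub := integral_sub hI3 hI1
  rw [hsub] at hkey
  norm_num at hkey
  -- so ∫ f²/t² = ∫ 2ff'/t
  have heq : (∫ t in Set.Ioi (1:ℝ), f t ^ 2 / t ^ 2) =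
      ∫ t in Set.Ioi (1:ℝ), 2 * f t * deriv f t / t := by linarith
  -- now Cauchy–Schwarz
  set I := ∫ t in Set.Ioi (1:ℝ), f t ^ 2 / t ^ 2 with hIdef
  set J := ∫ t in Set.Ioi (1:ℝ), deriv f t ^ 2 with hJdef
  have hI0 : 0 ≤ I := setIntegral_nonneg measurableSet_Ioi fun t ht => by positivity
  have hJ0 : 0 ≤ J := setIntegral_nonneg measurableSet_Ioi fun t ht => by positivity
  have hI4 : IntegrableOn (fun t => |f t| / t * (2 * |deriv f t|)) (Set.Ioi (1:ℝ)) := by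
    refine Integrable.mono' hIffg.integrableOn ?_ ?_
    · exact (((hfc.measurable.abs.div measurable_id).mul
        (measurable_const.mul hf'.measurable.abs)).aestronglyMeasurable).restrict
    refine (ae_restrict_iff' measurableSet_Ioi).mpr (Filter.Eventually.of_forall fun t ht => ?_)
    have ht1 : (1:ℝ) < t := ht
    have h1 : |f t| / t ≤ |f t| := by
      apply div_le_self (abs_nonneg _); linarith
    rw [Real.norm_eq_abs, abs_of_nonneg (by positivity)]
    calc |f t| / t * (2 * |deriv f t|) ≤ |f t| * (2 * |deriv f t|) := by
          apply mul_le_mul_of_nonneg_right h1; positivity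
      _ = 2 * |f t| * |deriv f t| := by ring
  have hmono : (∫ t in Set.Ioi (1:ℝ), 2 * f t * deriv f t / t) ≤
      ∫ t in Set.Ioi (1:ℝ), |f t| / t * (2 * |deriv f t|) := by
    refine setIntegral_mono_on hI3 hI4 measurableSet_Ioi fun t ht => ?_
    have ht1 : (1:ℝ) < t := ht
    have ht0 : (0:ℝ) < t := by linarith
    rw [show |f t| / t * (2 * |deriv f t|) = 2 * |f t| * |deriv f t| / t by field_simp]
    rw [div_le_div_iff_of_pos_right ht0]
    calc 2 * f t * deriv f t ≤ |2 * f t * deriv f t| := le_abs_self _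
      _ = 2 * |f t| * |deriv f t| := by rw [abs_mul, abs_mul]; simp [abs_of_nonneg]
  have hCS : (∫ t in Set.Ioi (1:ℝ), |f t| / t * (2 * |deriv f t|)) ≤
      (∫ t in Set.Ioi (1:ℝ), (|f t| / t) ^ 2) ^ ((1:ℝ)/2) *
      (∫ t in Set.Ioi (1:ℝ), (2 * |deriv f t|) ^ 2) ^ ((1:ℝ)/2) := by
    refine integral_CS _ _ _ ?_ ?_ ?_ ?_ ?_ ?_
    · exact (ae_restrict_iff' measurableSet_Ioi).mpr (Filter.Eventually.of_forall fun t ht => by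
        have : (1:ℝ) < t := ht; positivity)
    · exact Filter.Eventually.of_forall fun t => by positivity
    · exact ((hfc.measurable.abs.div measurable_id).aestronglyMeasurable).restrict
    · exact ((measurable_const.mul hf'.measurable.abs).aestronglyMeasurable).restrict
    · exact hI1.congr (Filter.Eventually.of_forall fun t => show f t ^ 2 / t ^ 2 = (|f t| / t) ^ 2 by rw [div_pow, sq_abs])
    · have h4 : IntegrableOn (fun t => 4 * deriv f t ^ 2) (Set.Ioi (1:ℝ)) := hI2.const_mul 4
      exact h4.congr (Filter.Eventually.of_forall fun t => show 4 * deriv f t ^ 2 = (2 * |deriv f t|) ^ 2 by rw [mul_pow, sq_abs]; norm_num)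
  have hsq1 : (∫ t in Set.Ioi (1:ℝ), (|f t| / t) ^ 2) = I := by
    rw [hIdef]; congr 1; funext t; rw [div_pow, sq_abs]
  have hsq2 : (∫ t in Set.Ioi (1:ℝ), (2 * |deriv f t|) ^ 2) = 4 * J := by
    rw [hJdef, ← integral_const_mul]; congr 1; funext t; rw [mul_pow, sq_abs]; norm_num
  rw [hsq1, hsq2] at hCS
  have h4J : (4 * J) ^ ((1:ℝ)/2) = 2 * J ^ ((1:ℝ)/2) := by
    rw [Real.mul_rpow (by norm_num) hJ0, four_rpow_half]
  rw [h4J] at hCS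
  have hfin : I ≤ I ^ ((1:ℝ)/2) * (2 * J ^ ((1:ℝ)/2)) := by
    calc I = ∫ t in Set.Ioi (1:ℝ), 2 * f t * deriv f t / t := heq
      _ ≤ _ := le_trans hmono hCS
  have hIr : (I ^ ((1:ℝ)/2)) ^ 2 = I := by
    rw [← rpow_two', ← Real.rpow_mul hI0]; norm_num
  have hJr : (J ^ ((1:ℝ)/2)) ^ 2 = J := by
    rw [← rpow_two', ← Real.rpow_mul hJ0]; norm_num
  have ha := Real.rpow_nonneg hI0 ((1:ℝ)/2)
  have hb := Real.rpow_nonneg hJ0 ((1:ℝ)/2)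
  nlinarith [sq_nonneg (I ^ ((1:ℝ)/2) - 2 * J ^ ((1:ℝ)/2))]

lemma omega_prod : OmegaPlus = (Set.univ : Set ℝ) ×ˢ Set.Ioi (1:ℝ) := by
  ext p; simp [OmegaPlus, Set.mem_prod]

lemma restrict_omega :
    (volume : Measure (ℝ × ℝ)).restrict OmegaPlus =
      (volume : Measure ℝ).prod ((volume : Measure ℝ).restrict (Set.Ioi 1)) := by
  rw [omega_prod, MeasureTheory.Measure.volume_eq_prod, ← Measure.prod_restrict, Measure.restrict_univ]

lemma hardy2d (f : ℝ × ℝ → ℝ) (hf : ContDiff ℝ 1 f) (hc : HasCompactSupport f)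
    (hts : tsupport f ⊆ OmegaPlus) :
    ∫ p in OmegaPlus, f p ^ 2 / p.2 ^ 2 ≤ 4 * ∫ p in OmegaPlus, (fderiv ℝ f p (0, 1)) ^ 2 := by
  have hfc : Continuous f := hf.continuous
  have hdiff : Differentiable ℝ f := hf.differentiable one_ne_zero
  -- measurability and integrability of the two integrands
  have hm1 : Measurable (fun p : ℝ × ℝ => f p ^ 2 / p.2 ^ 2) :=
    (hfc.measurable.pow_const 2).div (measurable_snd.pow_const 2)
  have hDc : Continuous (fun p => fderiv ℝ f p ((0:ℝ), (1:ℝ))) :=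
    (ContinuousLinearMap.apply ℝ ℝ ((0:ℝ),(1:ℝ))).continuous.comp (hf.continuous_fderiv one_ne_zero)
  have hI2g : Integrable (fun p : ℝ × ℝ => (fderiv ℝ f p ((0:ℝ),(1:ℝ))) ^ 2) := by
    apply Continuous.integrable_of_hasCompactSupport (hDc.pow 2)
    have := ((hc.fderiv ℝ).comp_left (g := fun L : (ℝ×ℝ) →L[ℝ] ℝ => (L ((0:ℝ),(1:ℝ)))^2) (by simp))
    exact this
  have hI1g : Integrable (fun p : ℝ × ℝ => f p ^ 2 / p.2 ^ 2) := by
    obtain ⟨M, hM⟩ := (hc.isCompact).exists_bound_of_continuousOn (hfc.pow 2).continuousOn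
    apply integrable_of_compact_bound volume _ hm1.aestronglyMeasurable (tsupport f) hc.isCompact
      (fun p hp => by rw [image_eq_zero_of_notMem_tsupport hp]; simp) M
    intro p hp
    have hp2 : 1 < p.2 := hts hp
    have : |f p ^ 2 / p.2 ^ 2| = f p ^ 2 / p.2 ^ 2 := abs_of_nonneg (by positivity)
    rw [this]
    calc f p ^ 2 / p.2 ^ 2 ≤ f p ^ 2 := div_le_self (sq_nonneg _) (by nlinarith)
      _ ≤ M := by have := hM p hp; rwa [Real.norm_eq_abs, abs_of_nonneg (sq_nonneg _)] at this
  have hInt1 : Integrable (fun p : ℝ × ℝ => f p ^ 2 / p.2 ^ 2)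
      (Measure.prod volume (volume.restrict (Set.Ioi 1))) := by
    rw [← restrict_omega]; exact hI1g.restrict
  have hInt2 : Integrable (fun p : ℝ × ℝ => (fderiv ℝ f p ((0:ℝ),(1:ℝ))) ^ 2)
      (Measure.prod volume (volume.restrict (Set.Ioi 1))) := by
    rw [← restrict_omega]; exact hI2g.restrict
  -- rewrite as iterated integrals
  have hF1 : ∫ p in OmegaPlus, f p ^ 2 / p.2 ^ 2 =
      ∫ x : ℝ, ∫ y in Set.Ioi (1:ℝ), f (x, y) ^ 2 / y ^ 2 := by
    rw [show (∫ p in OmegaPlus, f p ^ 2 / p.2 ^ 2) =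
        ∫ p, f p ^ 2 / p.2 ^ 2 ∂(Measure.prod volume (volume.restrict (Set.Ioi 1))) by
      rw [← restrict_omega]]
    exact integral_prod _ hInt1
  have hF2 : ∫ p in OmegaPlus, (fderiv ℝ f p ((0:ℝ),(1:ℝ))) ^ 2 =
      ∫ x : ℝ, ∫ y in Set.Ioi (1:ℝ), (fderiv ℝ f (x, y) ((0:ℝ),(1:ℝ))) ^ 2 := by
    rw [show (∫ p in OmegaPlus, (fderiv ℝ f p ((0:ℝ),(1:ℝ))) ^ 2) =
        ∫ p, (fderiv ℝ f p ((0:ℝ),(1:ℝ))) ^ 2 ∂(Measure.prod volume (volume.restrict (Set.Ioi 1))) by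
      rw [← restrict_omega]]
    exact integral_prod _ hInt2
  rw [hF1, hF2, ← integral_const_mul]
  -- slice facts
  have hslice : ∀ x : ℝ, (∫ y in Set.Ioi (1:ℝ), f (x, y) ^ 2 / y ^ 2) ≤
      4 * ∫ y in Set.Ioi (1:ℝ), (fderiv ℝ f (x, y) ((0:ℝ),(1:ℝ))) ^ 2 := by
    intro x
    set fx : ℝ → ℝ := fun y => f (x, y) with hfx
    have hfx1 : ContDiff ℝ 1 fx := hf.comp (contDiff_prodMk_right x)
    have hder : ∀ y : ℝ, HasDerivAt fx (fderiv ℝ f (x, y) ((0:ℝ),(1:ℝ))) y := by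
      intro y
      have h1 : HasDerivAt (fun y : ℝ => ((x : ℝ), y)) ((0:ℝ),(1:ℝ)) y :=
        (hasDerivAt_const y x).prodMk (hasDerivAt_id y)
      exact ((hdiff (x, y)).hasFDerivAt).comp_hasDerivAt y h1
    have hcx : HasCompactSupport fx := by
      have himg : IsCompact (Prod.snd '' tsupport f) := hc.isCompact.image continuous_snd
      refine IsCompact.of_isClosed_subset himg isClosed_closure ?_
      refine closure_minimal ?_ himg.isClosed
      intro y hy
      exact ⟨(x, y), subset_tsupport f hy, rfl⟩
    have h0x : ∀ y ≤ (1:ℝ), fx y = 0 := by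
      intro y hy
      by_contra hne
      have : (x, y) ∈ OmegaPlus := hts (subset_tsupport f hne)
      exact absurd this (by simp [OmegaPlus]; linarith)
    have := hardy1d fx hfx1 hcx h0x
    calc (∫ y in Set.Ioi (1:ℝ), f (x, y) ^ 2 / y ^ 2) ≤
        4 * ∫ y in Set.Ioi (1:ℝ), deriv fx y ^ 2 := this
      _ = 4 * ∫ y in Set.Ioi (1:ℝ), (fderiv ℝ f (x, y) ((0:ℝ),(1:ℝ))) ^ 2 := by
        congr 1
        refine setIntegral_congr_fun measurableSet_Ioi fun y _ => ?_
        rw [(hder y).deriv]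
  refine integral_mono hInt1.integral_prod_left ?_ hslice
  exact (hInt2.integral_prod_left).const_mul 4

lemma continuous_nsq : Continuous nsq := by
  unfold nsq; fun_prop

lemma omega_meas : MeasurableSet OmegaPlus :=
  measurableSet_lt measurable_const measurable_snd

lemma jacsq_continuous (v : ℝ × ℝ → ℝ × ℝ) (hv : ContDiff ℝ 1 v) : Continuous (jacsq v) := by
  have h := hv.continuous_fderiv one_ne_zero
  unfold jacsq
  exact (continuous_nsq.comp ((ContinuousLinearMap.apply ℝ (ℝ×ℝ) ((1:ℝ),(0:ℝ))).continuous.comp h)).add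
    (continuous_nsq.comp ((ContinuousLinearMap.apply ℝ (ℝ×ℝ) ((0:ℝ),(1:ℝ))).continuous.comp h))

lemma jacsq_compact_support (v : ℝ × ℝ → ℝ × ℝ) (hcv : HasCompactSupport v) :
    HasCompactSupport (jacsq v) := by
  have := (hcv.fderiv ℝ).comp_left
    (g := fun L : (ℝ×ℝ) →L[ℝ] (ℝ×ℝ) => nsq (L ((1:ℝ),(0:ℝ))) + nsq (L ((0:ℝ),(1:ℝ))))
    (by simp [nsq])
  exact this

lemma integrableOn_jacsq (v : ℝ × ℝ → ℝ × ℝ) (hv : ContDiff ℝ 1 v)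
    (hcv : HasCompactSupport v) : IntegrableOn (jacsq v) OmegaPlus :=
  ((jacsq_continuous v hv).integrable_of_hasCompactSupport
    (jacsq_compact_support v hcv)).integrableOn

lemma hardy_v (v : ℝ × ℝ → ℝ × ℝ) (hv : ContDiff ℝ 1 v) (hcv : HasCompactSupport v)
    (htv : tsupport v ⊆ OmegaPlus) :
    ∫ p in OmegaPlus, nsq (v p) / p.2 ^ 2 ≤ 4 * ∫ p in OmegaPlus, jacsq v p := by
  have hvc : Continuous v := hv.continuous
  have hvd : Differentiable ℝ v := hv.differentiable one_ne_zero
  set f1 : ℝ × ℝ → ℝ := fun p => (v p).1 with hf1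
  set f2 : ℝ × ℝ → ℝ := fun p => (v p).2 with hf2
  have hts1 : tsupport f1 ⊆ OmegaPlus := by
    refine subset_trans (closure_minimal ?_ (isClosed_tsupport v)) htv
    intro p hp
    exact subset_tsupport v (fun h => hp (by simp [hf1, h]))
  have hts2 : tsupport f2 ⊆ OmegaPlus := by
    refine subset_trans (closure_minimal ?_ (isClosed_tsupport v)) htv
    intro p hp
    exact subset_tsupport v (fun h => hp (by simp [hf2, h]))
  have hcd1 : ContDiff ℝ 1 f1 := contDiff_fst.comp hv
  have hcd2 : ContDiff ℝ 1 f2 := contDiff_snd.comp hv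
  have hcs1 : HasCompactSupport f1 := hcv.comp_left (g := Prod.fst) rfl
  have hcs2 : HasCompactSupport f2 := hcv.comp_left (g := Prod.snd) rfl
  have hH1 := hardy2d f1 hcd1 hcs1 hts1
  have hH2 := hardy2d f2 hcd2 hcs2 hts2
  -- identify the derivatives
  have hd1 : ∀ p, fderiv ℝ f1 p ((0:ℝ),(1:ℝ)) = (fderiv ℝ v p ((0:ℝ),(1:ℝ))).1 := by
    intro p
    have h := ((ContinuousLinearMap.fst ℝ ℝ ℝ).hasFDerivAt.comp p (hvd p).hasFDerivAt).fderiv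
    rw [show f1 = (ContinuousLinearMap.fst ℝ ℝ ℝ) ∘ v from rfl, h]; rfl
  have hd2 : ∀ p, fderiv ℝ f2 p ((0:ℝ),(1:ℝ)) = (fderiv ℝ v p ((0:ℝ),(1:ℝ))).2 := by
    intro p
    have h := ((ContinuousLinearMap.snd ℝ ℝ ℝ).hasFDerivAt.comp p (hvd p).hasFDerivAt).fderiv
    rw [show f2 = (ContinuousLinearMap.snd ℝ ℝ ℝ) ∘ v from rfl, h]; rfl
  -- integrability on OmegaPlus
  have hDcont : Continuous (fun p => fderiv ℝ v p ((0:ℝ),(1:ℝ))) :=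
    (ContinuousLinearMap.apply ℝ (ℝ×ℝ) ((0:ℝ),(1:ℝ))).continuous.comp (hv.continuous_fderiv one_ne_zero)
  have hID1 : IntegrableOn (fun p => ((fderiv ℝ v p ((0:ℝ),(1:ℝ))).1) ^ 2) OmegaPlus := by
    apply Integrable.integrableOn
    apply Continuous.integrable_of_hasCompactSupport ((hDcont.fst).pow 2)
    have := (hcv.fderiv ℝ).comp_left
      (g := fun L : (ℝ×ℝ) →L[ℝ] (ℝ×ℝ) => ((L ((0:ℝ),(1:ℝ))).1) ^ 2) (by simp)
    exact this
  have hID2 : IntegrableOn (fun p => ((fderiv ℝ v p ((0:ℝ),(1:ℝ))).2) ^ 2) OmegaPlus := by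
    apply Integrable.integrableOn
    apply Continuous.integrable_of_hasCompactSupport ((hDcont.snd).pow 2)
    have := (hcv.fderiv ℝ).comp_left
      (g := fun L : (ℝ×ℝ) →L[ℝ] (ℝ×ℝ) => ((L ((0:ℝ),(1:ℝ))).2) ^ 2) (by simp)
    exact this
  have hIf : ∀ (g : ℝ × ℝ → ℝ), Continuous g → (∀ p, p ∉ tsupport v → g p = 0) →
      IntegrableOn (fun p => g p ^ 2 / p.2 ^ 2) OmegaPlus := by
    intro g hg h0
    apply Integrable.integrableOn
    obtain ⟨M, hM⟩ := hcv.isCompact.exists_bound_of_continuousOn (hg.pow 2).continuousOn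
    apply integrable_of_compact_bound volume (fun p => g p ^ 2 / p.2 ^ 2)
      (((hg.measurable.pow_const 2).div (measurable_snd.pow_const 2)).aestronglyMeasurable)
      (tsupport v) hcv.isCompact (fun p hp => by rw [h0 p hp]; simp) M
    intro p hp
    have hp2 : 1 < p.2 := htv hp
    rw [abs_of_nonneg (by positivity)]
    calc g p ^ 2 / p.2 ^ 2 ≤ g p ^ 2 := div_le_self (sq_nonneg _) (by nlinarith)
      _ ≤ M := by have := hM p hp; rwa [Real.norm_eq_abs, abs_of_nonneg (sq_nonneg _)] at this
  have hIf1 : IntegrableOn (fun p => f1 p ^ 2 / p.2 ^ 2) OmegaPlus :=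
    hIf f1 (continuous_fst.comp hvc) (fun p hp => by
      simp only [hf1]; rw [image_eq_zero_of_notMem_tsupport hp]; simp)
  have hIf2 : IntegrableOn (fun p => f2 p ^ 2 / p.2 ^ 2) OmegaPlus :=
    hIf f2 (continuous_snd.comp hvc) (fun p hp => by
      simp only [hf2]; rw [image_eq_zero_of_notMem_tsupport hp]; simp)
  -- assemble
  have hsplit : ∫ p in OmegaPlus, nsq (v p) / p.2 ^ 2 =
      (∫ p in OmegaPlus, f1 p ^ 2 / p.2 ^ 2) + ∫ p in OmegaPlus, f2 p ^ 2 / p.2 ^ 2 := by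
    rw [← integral_add hIf1 hIf2]
    congr 1; funext p; simp only [nsq, hf1, hf2]; rw [add_div]
  have hD1eq : ∫ p in OmegaPlus, (fderiv ℝ f1 p ((0:ℝ),(1:ℝ))) ^ 2 =
      ∫ p in OmegaPlus, ((fderiv ℝ v p ((0:ℝ),(1:ℝ))).1) ^ 2 := by
    congr 1; funext p; rw [hd1 p]
  have hD2eq : ∫ p in OmegaPlus, (fderiv ℝ f2 p ((0:ℝ),(1:ℝ))) ^ 2 =
      ∫ p in OmegaPlus, ((fderiv ℝ v p ((0:ℝ),(1:ℝ))).2) ^ 2 := by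
    congr 1; funext p; rw [hd2 p]
  have hsum : (∫ p in OmegaPlus, ((fderiv ℝ v p ((0:ℝ),(1:ℝ))).1) ^ 2) +
      (∫ p in OmegaPlus, ((fderiv ℝ v p ((0:ℝ),(1:ℝ))).2) ^ 2) =
      ∫ p in OmegaPlus, nsq (fderiv ℝ v p ((0:ℝ),(1:ℝ))) := by
    rw [← integral_add hID1 hID2]
    simp only [nsq]
  have hlast : (∫ p in OmegaPlus, nsq (fderiv ℝ v p ((0:ℝ),(1:ℝ)))) ≤
      ∫ p in OmegaPlus, jacsq v p := by
    refine setIntegral_mono_on (hID1.add hID2 |>.congr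
      (Filter.Eventually.of_forall fun p => by simp [nsq]))
      (integrableOn_jacsq v hv hcv) omega_meas fun p _ => ?_
    unfold jacsq
    exact le_add_of_nonneg_left (nsq_nonneg _)
  linarith [hH1, hH2, hsplit, hD1eq ▸ hH1, hD2eq ▸ hH2]

/-- There is a constant `C` such that for all `C¹` vector fields `v, w` compactly supported
in `Ω₊` and every `C¹` vector field `ū` on `Ω₊` with
`N₂ = (∫_{Ω₊} y²|∇ū|²)^{1/2} < ∞` and `sup_{Ω₊} y²·|∇ū| ≤ N_∞ < ∞`, one has
`|∫_{Ω₊} [((v+e₁)·∇)ū]·w| ≤ C (1 + ‖∇v‖_{L²(Ω₊)}) (∫_{Ω₊} |w|²/y²)^{1/2} (N₂ + N_∞)`. -/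
theorem trilinear_continuity_weighted_two :
    ∃ C : ℝ, ∀ (v w ubar : ℝ × ℝ → ℝ × ℝ) (N2 Ninf : ℝ),
      ContDiff ℝ 1 v → ContDiff ℝ 1 w →
      HasCompactSupport v → HasCompactSupport w →
      tsupport v ⊆ OmegaPlus → tsupport w ⊆ OmegaPlus →
      ContDiffOn ℝ 1 ubar OmegaPlus →
      IntegrableOn (fun p => p.2 ^ 2 * jacsq ubar p) OmegaPlus →
      (∫ p in OmegaPlus, p.2 ^ 2 * jacsq ubar p) ^ ((1 : ℝ)/2) = N2 →
      (∀ p ∈ OmegaPlus, p.2 ^ 2 * Real.sqrt (jacsq ubar p) ≤ Ninf) →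
      |∫ p in OmegaPlus, dot2 (fderiv ℝ ubar p (v p + (1, 0))) (w p)| ≤
        C * (1 + (∫ p in OmegaPlus, jacsq v p) ^ ((1 : ℝ)/2)) *
          (∫ p in OmegaPlus, nsq (w p) / p.2 ^ 2) ^ ((1 : ℝ)/2) * (N2 + Ninf) := by
  use 3
  intro v w ubar N2 Ninf hv hw hcv hcw htv htw hub hIub hN2 hNinf
  have hvc : Continuous v := hv.continuous
  have hwc : Continuous w := hw.continuous
  set U : ℝ × ℝ → ℝ := fun p => Real.sqrt (jacsq ubar p) with hU
  set Vn : ℝ × ℝ → ℝ := fun p => Real.sqrt (nsq (v p)) with hVn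
  set Wn : ℝ × ℝ → ℝ := fun p => Real.sqrt (nsq (w p)) with hWn
  have hVnc : Continuous Vn := Real.continuous_sqrt.comp (continuous_nsq.comp hvc)
  have hWnc : Continuous Wn := Real.continuous_sqrt.comp (continuous_nsq.comp hwc)
  have hjm : Measurable (jacsq ubar) := by
    unfold jacsq
    exact (continuous_nsq.measurable.comp (measurable_fderiv_apply_const ℝ ubar _)).add
      (continuous_nsq.measurable.comp (measurable_fderiv_apply_const ℝ ubar _))
  have hUm : Measurable U := Real.continuous_sqrt.measurable.comp hjm
  have hU0 : ∀ p, 0 ≤ U p := fun p => Real.sqrt_nonneg _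
  have hVn0 : ∀ p, 0 ≤ Vn p := fun p => Real.sqrt_nonneg _
  have hWn0 : ∀ p, 0 ≤ Wn p := fun p => Real.sqrt_nonneg _
  have hKw : IsCompact (tsupport w) := hcw.isCompact
  have hKv : IsCompact (tsupport v) := hcv.isCompact
  -- nonnegativity of the various constants
  have hX0 : 0 ≤ ∫ p in OmegaPlus, jacsq v p :=
    setIntegral_nonneg omega_meas fun p _ => jacsq_nonneg v p
  set X := (∫ p in OmegaPlus, jacsq v p) ^ ((1:ℝ)/2) with hXdef
  have hX0' : 0 ≤ X := Real.rpow_nonneg hX0 _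
  have hIw2int0 : 0 ≤ ∫ p in OmegaPlus, nsq (w p) / p.2 ^ 2 :=
    setIntegral_nonneg omega_meas fun p hp => by
      have h2 : (1:ℝ) < p.2 := hp
      have := nsq_nonneg (w p); positivity
  set W2 := (∫ p in OmegaPlus, nsq (w p) / p.2 ^ 2) ^ ((1:ℝ)/2) with hW2def
  have hW20 : 0 ≤ W2 := Real.rpow_nonneg hIw2int0 _
  have hN20 : 0 ≤ N2 := by
    rw [← hN2]
    exact Real.rpow_nonneg (setIntegral_nonneg omega_meas fun p hp =>
      mul_nonneg (sq_nonneg _) (jacsq_nonneg _ _)) _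
  have hNinf0 : 0 ≤ Ninf := by
    refine le_trans ?_ (hNinf ((0:ℝ),(2:ℝ)) (by norm_num [OmegaPlus]))
    positivity
  -- pointwise bound on U over Omega
  have hUb : ∀ p ∈ OmegaPlus, U p ≤ Ninf / p.2 ^ 2 := by
    intro p hp
    have hp2 : (1:ℝ) < p.2 := hp
    rw [le_div_iff₀ (by positivity), mul_comm]
    exact hNinf p hp
  have hUKw : ∀ p ∈ tsupport w, U p ≤ Ninf := by
    intro p hp
    have hp2 : (1:ℝ) < p.2 := htw hp
    exact (hUb p (htw hp)).trans (div_le_self hNinf0 (by nlinarith))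
  -- bounds of Vn, Wn on tsupport w
  obtain ⟨Mw, hMw⟩ := hKw.exists_bound_of_continuousOn hWnc.continuousOn
  obtain ⟨Mv, hMv⟩ := hKw.exists_bound_of_continuousOn hVnc.continuousOn
  have hMw' : ∀ p ∈ tsupport w, Wn p ≤ Mw := fun p hp => by
    have := hMw p hp; rwa [Real.norm_eq_abs, abs_of_nonneg (hWn0 p)] at this
  have hMv' : ∀ p ∈ tsupport w, Vn p ≤ Mv := fun p hp => by
    have := hMv p hp; rwa [Real.norm_eq_abs, abs_of_nonneg (hVn0 p)] at this
  have hWn_zero : ∀ p, p ∉ tsupport w → Wn p = 0 := fun p hp => by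
    simp [hWn, nsq, image_eq_zero_of_notMem_tsupport hp]
  -- integrability of U * Wn
  have hIUW : IntegrableOn (fun p => U p * Wn p) OmegaPlus := by
    apply Integrable.integrableOn
    apply integrable_of_compact_bound volume (fun p => U p * Wn p) ((hUm.mul hWnc.measurable).aestronglyMeasurable)
      (tsupport w) hKw (fun p hp => by rw [hWn_zero p hp, mul_zero]) (Ninf * Mw)
    intro p hp
    rw [abs_of_nonneg (mul_nonneg (hU0 p) (hWn0 p))]
    exact mul_le_mul (hUKw p hp) (hMw' p hp) (hWn0 p) hNinf0
  -- integrability of U * Vn * Wn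
  have hIUVW : IntegrableOn (fun p => U p * Vn p * Wn p) OmegaPlus := by
    apply Integrable.integrableOn
    apply integrable_of_compact_bound volume (fun p => U p * Vn p * Wn p)
      (((hUm.mul hVnc.measurable).mul hWnc.measurable).aestronglyMeasurable)
      (tsupport w) hKw (fun p hp => by rw [hWn_zero p hp, mul_zero]) (Ninf * Mv * Mw)
    intro p hp
    rw [abs_of_nonneg (mul_nonneg (mul_nonneg (hU0 p) (hVn0 p)) (hWn0 p))]
    have h1 : U p * Vn p ≤ Ninf * Mv :=
      mul_le_mul (hUKw p hp) (hMv' p hp) (hVn0 p) hNinf0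
    exact mul_le_mul h1 (hMw' p hp) (hWn0 p) (mul_nonneg hNinf0 ((hVn0 p).trans (hMv' p hp)))
  -- integrability of nsq w / y^2
  obtain ⟨Mnw, hMnw⟩ := hKw.exists_bound_of_continuousOn (continuous_nsq.comp hwc).continuousOn
  have hIw2 : IntegrableOn (fun p => nsq (w p) / p.2 ^ 2) OmegaPlus := by
    apply Integrable.integrableOn
    apply integrable_of_compact_bound volume (fun p => nsq (w p) / p.2 ^ 2)
      (((continuous_nsq.comp hwc).measurable.div (measurable_snd.pow_const 2)).aestronglyMeasurable)
      (tsupport w) hKw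
      (fun p hp => by simp [nsq, image_eq_zero_of_notMem_tsupport hp]) Mnw
    intro p hp
    have hp2 : (1:ℝ) < p.2 := htw hp
    rw [abs_of_nonneg (by have := nsq_nonneg (w p); positivity)]
    calc nsq (w p) / p.2 ^ 2 ≤ nsq (w p) := div_le_self (nsq_nonneg _) (by nlinarith)
      _ ≤ Mnw := by
        have := hMnw p hp
        simpa [Real.norm_eq_abs, Function.comp, abs_of_nonneg (nsq_nonneg (w p))] using this
  have hIWy2 : IntegrableOn (fun p => (Wn p / p.2) ^ 2) OmegaPlus :=
    hIw2.congr (Filter.Eventually.of_forall fun p =>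
      show nsq (w p) / p.2 ^ 2 = (Wn p / p.2) ^ 2 by
        rw [div_pow, hWn, Real.sq_sqrt (nsq_nonneg _)])
  -- integrability of (y U)^2
  have hIU2 : IntegrableOn (fun p => (p.2 * U p) ^ 2) OmegaPlus :=
    hIub.congr (Filter.Eventually.of_forall fun p =>
      show p.2 ^ 2 * jacsq ubar p = (p.2 * U p) ^ 2 by
        rw [mul_pow, hU, Real.sq_sqrt (jacsq_nonneg _ _)])
  -- integrability of (Vn/y)(Wn/y)
  have hIVWy : IntegrableOn (fun p => (Vn p / p.2) * (Wn p / p.2)) OmegaPlus := by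
    apply Integrable.integrableOn
    apply integrable_of_compact_bound volume (fun p => (Vn p / p.2) * (Wn p / p.2))
      (((hVnc.measurable.div measurable_snd).mul
        (hWnc.measurable.div measurable_snd)).aestronglyMeasurable)
      (tsupport w) hKw
      (fun p hp => by rw [hWn_zero p hp]; simp) (Mv * Mw)
    intro p hp
    have hp2 : (1:ℝ) < p.2 := htw hp
    have h1 : Vn p / p.2 ≤ Mv := (div_le_self (hVn0 p) (by linarith)).trans (hMv' p hp)
    have h2 : Wn p / p.2 ≤ Mw := (div_le_self (hWn0 p) (by linarith)).trans (hMw' p hp)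
    rw [abs_of_nonneg (mul_nonneg (by positivity) (by positivity))]
    exact mul_le_mul h1 h2 (by positivity) ((div_nonneg (hVn0 p) (by linarith)).trans h1)
  -- integrability of nsq v / y^2 and (Vn/y)^2
  obtain ⟨Mnv, hMnv⟩ := hKv.exists_bound_of_continuousOn (continuous_nsq.comp hvc).continuousOn
  have hIv2 : IntegrableOn (fun p => nsq (v p) / p.2 ^ 2) OmegaPlus := by
    apply Integrable.integrableOn
    apply integrable_of_compact_bound volume (fun p => nsq (v p) / p.2 ^ 2)
      (((continuous_nsq.comp hvc).measurable.div (measurable_snd.pow_const 2)).aestronglyMeasurable)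
      (tsupport v) hKv
      (fun p hp => by simp [nsq, image_eq_zero_of_notMem_tsupport hp]) Mnv
    intro p hp
    have hp2 : (1:ℝ) < p.2 := htv hp
    rw [abs_of_nonneg (by have := nsq_nonneg (v p); positivity)]
    calc nsq (v p) / p.2 ^ 2 ≤ nsq (v p) := div_le_self (nsq_nonneg _) (by nlinarith)
      _ ≤ Mnv := by
        have := hMnv p hp
        simpa [Real.norm_eq_abs, Function.comp, abs_of_nonneg (nsq_nonneg (v p))] using this
  have hIVy2 : IntegrableOn (fun p => (Vn p / p.2) ^ 2) OmegaPlus :=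
    hIv2.congr (Filter.Eventually.of_forall fun p =>
      show nsq (v p) / p.2 ^ 2 = (Vn p / p.2) ^ 2 by
        rw [div_pow, hVn, Real.sq_sqrt (nsq_nonneg _)])
  -- the main integrand: measurability and integrability
  have hIg : IntegrableOn (fun p => U p * (Vn p + 1) * Wn p) OmegaPlus :=
    (hIUW.add hIUVW).congr (Filter.Eventually.of_forall fun p => by simp only [Pi.add_apply]; ring)
  have hmain_meas : Measurable (fun p => dot2 (fderiv ℝ ubar p (v p + (1, 0))) (w p)) := by
    have hb : Continuous (fun q : ((ℝ×ℝ) →L[ℝ] (ℝ×ℝ)) × (ℝ×ℝ) => q.1 q.2) :=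
      isBoundedBilinearMap_apply.continuous
    have h1 : Measurable (fun p => fderiv ℝ ubar p (v p + ((1:ℝ),(0:ℝ)))) :=
      hb.measurable.comp ((measurable_fderiv ℝ ubar).prodMk
        (hvc.add continuous_const).measurable)
    unfold dot2
    exact (h1.fst.mul hwc.measurable.fst).add (h1.snd.mul hwc.measurable.snd)
  have hImain : IntegrableOn (fun p => dot2 (fderiv ℝ ubar p (v p + (1, 0))) (w p)) OmegaPlus := by
    refine Integrable.mono' hIg (hmain_meas.aestronglyMeasurable.restrict) ?_
    exact Filter.Eventually.of_forall fun p => by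
      rw [Real.norm_eq_abs]; exact pointwise_bound ubar v w p
  -- step 1 : |∫ main| ≤ ∫ g
  have habs : |∫ p in OmegaPlus, dot2 (fderiv ℝ ubar p (v p + (1, 0))) (w p)| ≤
      ∫ p in OmegaPlus, U p * (Vn p + 1) * Wn p := by
    have h := norm_integral_le_integral_norm
      (μ := (volume : Measure (ℝ×ℝ)).restrict OmegaPlus)
      (fun p => dot2 (fderiv ℝ ubar p (v p + (1, 0))) (w p))
    simp only [Real.norm_eq_abs] at h
    refine le_trans h ?_
    exact integral_mono hImain.abs hIg (fun p => pointwise_bound ubar v w p)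
  -- step 2 : split
  have hsplit : (∫ p in OmegaPlus, U p * (Vn p + 1) * Wn p) =
      (∫ p in OmegaPlus, U p * Wn p) + ∫ p in OmegaPlus, U p * Vn p * Wn p := by
    rw [← integral_add hIUW hIUVW]
    congr 1; funext p; ring
  -- step 3 : term A
  have hA : (∫ p in OmegaPlus, U p * Wn p) ≤ N2 * W2 := by
    have hcong : (∫ p in OmegaPlus, U p * Wn p) =
        ∫ p in OmegaPlus, (p.2 * U p) * (Wn p / p.2) := by
      refine setIntegral_congr_fun omega_meas fun p hp => ?_
      have hp2 : (1:ℝ) < p.2 := hp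
      field_simp
    rw [hcong]
    have hCS := integral_CS ((volume : Measure (ℝ×ℝ)).restrict OmegaPlus)
      (fun p => p.2 * U p) (fun p => Wn p / p.2)
      ((ae_restrict_iff' omega_meas).mpr (Filter.Eventually.of_forall fun p hp => by
        have hp2 : (1:ℝ) < p.2 := hp
        exact mul_nonneg (by linarith) (hU0 p)))
      ((ae_restrict_iff' omega_meas).mpr (Filter.Eventually.of_forall fun p hp => by
        have hp2 : (1:ℝ) < p.2 := hp
        exact div_nonneg (hWn0 p) (by linarith)))
      ((measurable_snd.mul hUm).aestronglyMeasurable.restrict)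
      ((hWnc.measurable.div measurable_snd).aestronglyMeasurable.restrict)
      hIU2 hIWy2
    refine le_trans hCS ?_
    have e1 : (∫ p in OmegaPlus, (p.2 * U p) ^ 2) = ∫ p in OmegaPlus, p.2 ^ 2 * jacsq ubar p := by
      congr 1; funext p; rw [mul_pow, hU, Real.sq_sqrt (jacsq_nonneg _ _)]
    have e2 : (∫ p in OmegaPlus, (Wn p / p.2) ^ 2) = ∫ p in OmegaPlus, nsq (w p) / p.2 ^ 2 := by
      congr 1; funext p; rw [div_pow, hWn, Real.sq_sqrt (nsq_nonneg _)]
    rw [e1, e2, hN2, ← hW2def]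
  -- step 4 : term B
  have hBmono : (∫ p in OmegaPlus, U p * Vn p * Wn p) ≤
      ∫ p in OmegaPlus, Ninf * ((Vn p / p.2) * (Wn p / p.2)) := by
    refine setIntegral_mono_on hIUVW (hIVWy.const_mul Ninf) omega_meas fun p hp => ?_
    have hp2 : (1:ℝ) < p.2 := hp
    calc U p * Vn p * Wn p ≤ (Ninf / p.2 ^ 2) * Vn p * Wn p := by
          exact mul_le_mul_of_nonneg_right
            (mul_le_mul_of_nonneg_right (hUb p hp) (hVn0 p)) (hWn0 p)
      _ = Ninf * ((Vn p / p.2) * (Wn p / p.2)) := by field_simp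
  have hCS2 := integral_CS ((volume : Measure (ℝ×ℝ)).restrict OmegaPlus)
    (fun p => Vn p / p.2) (fun p => Wn p / p.2)
    ((ae_restrict_iff' omega_meas).mpr (Filter.Eventually.of_forall fun p hp => by
      have hp2 : (1:ℝ) < p.2 := hp
      exact div_nonneg (hVn0 p) (by linarith)))
    ((ae_restrict_iff' omega_meas).mpr (Filter.Eventually.of_forall fun p hp => by
      have hp2 : (1:ℝ) < p.2 := hp
      exact div_nonneg (hWn0 p) (by linarith)))
    ((hVnc.measurable.div measurable_snd).aestronglyMeasurable.restrict)
    ((hWnc.measurable.div measurable_snd).aestronglyMeasurable.restrict)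
    hIVy2 hIWy2
  have eV : (∫ p in OmegaPlus, (Vn p / p.2) ^ 2) = ∫ p in OmegaPlus, nsq (v p) / p.2 ^ 2 := by
    congr 1; funext p; rw [div_pow, hVn, Real.sq_sqrt (nsq_nonneg _)]
  have eW : (∫ p in OmegaPlus, (Wn p / p.2) ^ 2) = ∫ p in OmegaPlus, nsq (w p) / p.2 ^ 2 := by
    congr 1; funext p; rw [div_pow, hWn, Real.sq_sqrt (nsq_nonneg _)]
  have hv2y0 : 0 ≤ ∫ p in OmegaPlus, nsq (v p) / p.2 ^ 2 :=
    setIntegral_nonneg omega_meas fun p hp => by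
      have h2 : (1:ℝ) < p.2 := hp
      have := nsq_nonneg (v p); positivity
  have hhardy := hardy_v v hv hcv htv
  have hrt : (∫ p in OmegaPlus, nsq (v p) / p.2 ^ 2) ^ ((1:ℝ)/2) ≤ 2 * X := by
    calc (∫ p in OmegaPlus, nsq (v p) / p.2 ^ 2) ^ ((1:ℝ)/2)
        ≤ (4 * ∫ p in OmegaPlus, jacsq v p) ^ ((1:ℝ)/2) :=
          Real.rpow_le_rpow hv2y0 hhardy (by norm_num)
      _ = 2 * X := by rw [Real.mul_rpow (by norm_num) hX0, four_rpow_half, hXdef]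
  have hB : (∫ p in OmegaPlus, U p * Vn p * Wn p) ≤ Ninf * (2 * X * W2) := by
    refine le_trans hBmono ?_
    rw [integral_const_mul]
    refine mul_le_mul_of_nonneg_left ?_ hNinf0
    refine le_trans hCS2 ?_
    rw [eV, eW, ← hW2def]
    exact mul_le_mul_of_nonneg_right hrt hW20
  -- final assembly
  calc |∫ p in OmegaPlus, dot2 (fderiv ℝ ubar p (v p + (1, 0))) (w p)|
      ≤ ∫ p in OmegaPlus, U p * (Vn p + 1) * Wn p := habs
    _ = (∫ p in OmegaPlus, U p * Wn p) + ∫ p in OmegaPlus, U p * Vn p * Wn p := hsplit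
    _ ≤ N2 * W2 + Ninf * (2 * X * W2) := add_le_add hA hB
    _ ≤ 3 * (1 + X) * W2 * (N2 + Ninf) := by
        nlinarith [mul_nonneg hN20 hW20, mul_nonneg hNinf0 hW20,
          mul_nonneg (mul_nonneg hX0' hW20) hN20, mul_nonneg (mul_nonneg hX0' hW20) hNinf0]
end
end

section
/- Let α > 1 and M ≥ 0. There exists a constant C, depending only on α, such that the following holds. Let û : ℝ × [1,∞) → ℂ be measurable with |û(k,z)| ≤ M·(z^{-1/2}/(1 + (|k|z)^α) + 1/(1 + (|k|z²)^α)) for all k and all z ≥ 1, and define u(x,z) = ∫_ℝ e^{ikx} û(k,z) dk (the integrand being integrable in k for each z). Then for every x ∈ ℝ and every y ≥ 1, the function ψ(x,y) = −∫₁^y u(x,z) dz is well defined and satisfies |ψ(x,y)| ≤ C·M. -/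
open MeasureTheory intervalIntegral

noncomputable section

lemma aux_g_integrable {α : ℝ} (hα : 1 < α) :
    Integrable (fun k : ℝ => 1 / (1 + |k| ^ α)) := by
  have hα0 : (0:ℝ) < α := lt_trans one_pos hα
  have h1 : Integrable (fun k : ℝ => (1 + ‖k‖) ^ (-α)) :=
    integrable_one_add_norm (by simpa using hα)
  refine (h1.const_mul ((2:ℝ) ^ α)).mono' ?_ (Filter.Eventually.of_forall fun k => ?_)
  · apply Measurable.aestronglyMeasurable
    fun_prop
  · have hk : (0:ℝ) ≤ |k| := abs_nonneg k
    have h2 : (0:ℝ) < 1 + |k| ^ α := by positivity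
    have h3 : (0:ℝ) < 1 + |k| := by positivity
    rw [Real.norm_eq_abs, abs_of_nonneg (by positivity), Real.norm_eq_abs,
      Real.rpow_neg h3.le, ← div_eq_mul_inv]
    rw [div_le_div_iff₀ h2 (by positivity)]
    have hmax : (1 + |k|) ^ α ≤ (2 * max 1 |k|) ^ α := by
      apply Real.rpow_le_rpow h3.le _ hα0.le
      rcases le_total 1 |k| with h | h
      · rw [max_eq_right h]; linarith
      · rw [max_eq_left h]; linarith
    have hmax2 : (2 * max 1 |k|) ^ α = 2 ^ α * (max 1 |k|) ^ α :=
      Real.mul_rpow (by norm_num) (le_max_of_le_left zero_le_one)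
    have hmax3 : (max 1 |k|) ^ α ≤ 1 + |k| ^ α := by
      rcases le_total 1 |k| with h | h
      · rw [max_eq_right h]
        have : (0:ℝ) ≤ |k| ^ α := Real.rpow_nonneg hk α
        linarith
      · rw [max_eq_left h, Real.one_rpow]
        have : (0:ℝ) ≤ |k| ^ α := Real.rpow_nonneg hk α
        linarith
    calc 1 * (1 + |k|) ^ α = (1 + |k|) ^ α := one_mul _
      _ ≤ 2 ^ α * (max 1 |k|) ^ α := by rw [← hmax2]; exact hmax
      _ ≤ 2 ^ α * (1 + |k| ^ α) := by
          apply mul_le_mul_of_nonneg_left hmax3 (Real.rpow_nonneg (by norm_num) α)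

/-- Let `α > 1`.  There is a constant `C` depending only on `α` such that: whenever
`û : ℝ × [1,∞) → ℂ` is measurable with
`|û(k,z)| ≤ M (z^{-1/2}/(1+(|k|z)^α) + 1/(1+(|k|z²)^α))` for all `k` and all `z ≥ 1`, and
`u(x,z) = ∫ e^{ikx} û(k,z) dk`, then for every `x` and every `y ≥ 1` the stream-function
value `ψ(x,y) = −∫₁^y u(x,z) dz` is well defined (the integrand is interval integrable)
and `|ψ(x,y)| ≤ C M`. -/
theorem stream_function_bounded (α : ℝ) (hα : 1 < α) :
    ∃ C : ℝ, ∀ (M : ℝ) (uhat : ℝ → ℝ → ℂ),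
      0 ≤ M →
      Measurable (fun z : ℝ × ℝ => uhat z.1 z.2) →
      (∀ (k z : ℝ), 1 ≤ z → ‖uhat k z‖ ≤
        M * (z ^ (-(1 : ℝ)/2) / (1 + (|k| * z) ^ α) + 1 / (1 + (|k| * z ^ 2) ^ α))) →
      ∀ (x y : ℝ), 1 ≤ y →
        IntervalIntegrable
          (fun z : ℝ => ∫ k : ℝ, Complex.exp (Complex.I * k * x) * uhat k z) volume 1 y ∧
        ‖-∫ z in (1 : ℝ)..y, ∫ k : ℝ, Complex.exp (Complex.I * k * x) * uhat k z‖ ≤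
          C * M := by
  classical
  set g : ℝ → ℝ := fun k => 1 / (1 + |k| ^ α) with hg
  have hgint : Integrable g := aux_g_integrable hα
  set I : ℝ := ∫ k, g k with hIdef
  have hI0 : 0 ≤ I := integral_nonneg (fun k => by rw [hg]; positivity)
  refine ⟨4 * I, ?_⟩
  intro M uhat hM hmeas hbound x y hy
  set F : ℝ → ℂ := fun z => ∫ k : ℝ, Complex.exp (Complex.I * k * x) * uhat k z with hFdef
  -- key per-z estimate
  have key : ∀ z : ℝ, 1 ≤ z →
      ‖F z‖ ≤ 2 * (M * I) * z ^ (-(3:ℝ)/2) := by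
    intro z hz
    have hz0 : (0:ℝ) < z := lt_of_lt_of_le one_pos hz
    have hz20 : (0:ℝ) < z ^ 2 := by positivity
    have habs : ∀ k : ℝ, |z * k| = |k| * z := fun k => by
      rw [abs_mul, abs_of_pos hz0, mul_comm]
    have habs2 : ∀ k : ℝ, |z ^ 2 * k| = |k| * z ^ 2 := fun k => by
      rw [abs_mul, abs_of_pos hz20, mul_comm]
    have hint1 : Integrable (fun k : ℝ => g (z * k)) := hgint.comp_mul_left' hz0.ne'
    have hint2 : Integrable (fun k : ℝ => g (z ^ 2 * k)) := hgint.comp_mul_left' hz20.ne'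
    have hBeq : (fun k : ℝ => M * (z ^ (-(1 : ℝ)/2) / (1 + (|k| * z) ^ α)
        + 1 / (1 + (|k| * z ^ 2) ^ α)))
        = fun k : ℝ => M * (z ^ (-(1:ℝ)/2) * g (z * k) + g (z ^ 2 * k)) := by
      funext k
      simp only [hg]
      rw [habs k, habs2 k]
      ring
    have hBint : Integrable (fun k : ℝ => M * (z ^ (-(1 : ℝ)/2) / (1 + (|k| * z) ^ α)
        + 1 / (1 + (|k| * z ^ 2) ^ α))) := by
      rw [hBeq]
      exact ((hint1.const_mul _).add hint2).const_mul M
    have hmeask : Measurable (fun k : ℝ => uhat k z) :=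
      hmeas.comp (measurable_id.prodMk measurable_const)
    have hexp : Measurable (fun k : ℝ => Complex.exp (Complex.I * (k:ℂ) * (x:ℂ))) := by
      fun_prop
    have hnorm : ∀ k : ℝ, ‖Complex.exp (Complex.I * (k:ℂ) * (x:ℂ)) * uhat k z‖
        = ‖uhat k z‖ := by
      intro k
      rw [norm_mul]
      have h1 : ‖Complex.exp (Complex.I * (k:ℂ) * (x:ℂ))‖ = 1 := by
        rw [Complex.norm_exp]
        simp [Complex.mul_re]
      rw [h1, one_mul]
    have hfint : Integrable (fun k : ℝ => Complex.exp (Complex.I * (k:ℂ) * (x:ℂ)) * uhat k z) := by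
      refine hBint.mono' ((hexp.mul hmeask).aestronglyMeasurable)
        (Filter.Eventually.of_forall fun k => ?_)
      rw [hnorm k]
      exact hbound k z hz
    have hIB : (∫ k : ℝ, M * (z ^ (-(1 : ℝ)/2) / (1 + (|k| * z) ^ α)
        + 1 / (1 + (|k| * z ^ 2) ^ α)))
        = M * (z ^ (-(1:ℝ)/2) * (z⁻¹ * I) + (z ^ 2)⁻¹ * I) := by
      rw [hBeq, MeasureTheory.integral_const_mul, integral_add (hint1.const_mul _) hint2,
        MeasureTheory.integral_const_mul, MeasureTheory.Measure.integral_comp_mul_left g z,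
        MeasureTheory.Measure.integral_comp_mul_left g (z ^ 2), smul_eq_mul, smul_eq_mul,
        abs_of_pos (inv_pos.mpr hz0), abs_of_pos (inv_pos.mpr hz20)]
    have hrw1 : z ^ (-(1:ℝ)/2) * z⁻¹ = z ^ (-(3:ℝ)/2) := by
      rw [← Real.rpow_neg_one z, ← Real.rpow_add hz0]
      norm_num
    have hrw2 : (z ^ 2)⁻¹ = z ^ (-(2:ℝ)) := by
      rw [← Real.rpow_natCast z 2, ← Real.rpow_neg hz0.le]
      norm_num
    have hcmp : z ^ (-(2:ℝ)) ≤ z ^ (-(3:ℝ)/2) :=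
      Real.rpow_le_rpow_of_exponent_le hz (by norm_num)
    calc ‖F z‖ ≤ ∫ k : ℝ, ‖Complex.exp (Complex.I * (k:ℂ) * (x:ℂ)) * uhat k z‖ :=
          norm_integral_le_integral_norm _
      _ ≤ ∫ k : ℝ, M * (z ^ (-(1 : ℝ)/2) / (1 + (|k| * z) ^ α)
            + 1 / (1 + (|k| * z ^ 2) ^ α)) := by
          refine integral_mono hfint.norm hBint fun k => ?_
          rw [hnorm k]
          exact hbound k z hz
      _ = M * (z ^ (-(1:ℝ)/2) * (z⁻¹ * I) + (z ^ 2)⁻¹ * I) := hIB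
      _ = M * (z ^ (-(3:ℝ)/2) * I + z ^ (-(2:ℝ)) * I) := by
          rw [← mul_assoc, hrw1, hrw2]
      _ ≤ 2 * (M * I) * z ^ (-(3:ℝ)/2) := by
          have h1 : z ^ (-(2:ℝ)) * I ≤ z ^ (-(3:ℝ)/2) * I :=
            mul_le_mul_of_nonneg_right hcmp hI0
          nlinarith [Real.rpow_nonneg hz0.le (-(3:ℝ)/2), mul_nonneg hM hI0]
  -- strong measurability of F
  have hFmeas : StronglyMeasurable F := by
    have h2 : Measurable (fun p : ℝ × ℝ =>
        Complex.exp (Complex.I * (p.2:ℂ) * (x:ℂ)) * uhat p.2 p.1) := by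
      exact ((by fun_prop : Measurable fun p : ℝ × ℝ =>
        Complex.exp (Complex.I * (p.2:ℂ) * (x:ℂ)))).mul (hmeas.comp measurable_swap)
    exact h2.stronglyMeasurable.integral_prod_right'
  -- interval integrability of F
  have hF_ii : IntervalIntegrable F volume 1 y := by
    rw [intervalIntegrable_iff_integrableOn_Ioc_of_le hy]
    refine Integrable.mono' (g := fun _ : ℝ => 2 * (M * I))
      (integrableOn_const measure_Ioc_lt_top.ne)
      hFmeas.aestronglyMeasurable.restrict ?_
    refine (ae_restrict_iff' measurableSet_Ioc).mpr (ae_of_all _ fun z hz => ?_)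
    have h1 : (1:ℝ) ≤ z := hz.1.le
    refine (key z h1).trans ?_
    have : z ^ (-(3:ℝ)/2) ≤ 1 :=
      Real.rpow_le_one_of_one_le_of_nonpos h1 (by norm_num)
    exact mul_le_of_le_one_right (by positivity) this
  refine ⟨hF_ii, ?_⟩
  have hG_ii : IntervalIntegrable (fun z : ℝ => 2 * (M * I) * z ^ (-(3:ℝ)/2)) volume 1 y := by
    apply IntervalIntegrable.const_mul
    apply intervalIntegral.intervalIntegrable_rpow
    exact Or.inr (Set.notMem_uIcc_of_lt one_pos (lt_of_lt_of_le one_pos hy))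
  have hrpow_int : (∫ z in (1:ℝ)..y, z ^ (-(3:ℝ)/2)) ≤ 2 := by
    rw [integral_rpow (Or.inr ⟨by norm_num,
      Set.notMem_uIcc_of_lt one_pos (lt_of_lt_of_le one_pos hy)⟩)]
    have h1 : (0:ℝ) ≤ y ^ (-(3:ℝ)/2 + 1) := Real.rpow_nonneg (by linarith) _
    rw [Real.one_rpow, div_le_iff_of_neg (by norm_num : (-(3:ℝ)/2 + 1) < 0)]
    linarith
  rw [norm_neg]
  calc ‖∫ z in (1:ℝ)..y, F z‖ ≤ ∫ z in (1:ℝ)..y, ‖F z‖ :=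
        intervalIntegral.norm_integral_le_integral_norm hy
    _ ≤ ∫ z in (1:ℝ)..y, 2 * (M * I) * z ^ (-(3:ℝ)/2) := by
        refine intervalIntegral.integral_mono_on hy hF_ii.norm hG_ii fun z hz => key z hz.1
    _ = 2 * (M * I) * ∫ z in (1:ℝ)..y, z ^ (-(3:ℝ)/2) := by
        rw [intervalIntegral.integral_const_mul]
    _ ≤ 2 * (M * I) * 2 := by
        have h0 : (0:ℝ) ≤ 2 * (M * I) := by positivity
        exact mul_le_mul_of_nonneg_left hrpow_int h0
    _ = 4 * I * M := by ring
end
end
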